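/- Let μ and μ_k (k ∈ ℕ) be isotropic log-concave probability measures on ℝⁿ such that μ_k → μ weakly. Then for every p ≥ 1 and every continuous function g : ℝⁿ → ℝ with |g(x)| ≤ C(1 + ‖x‖^p) for some constant C, one has ∫g dμ_k → ∫g dμ; in particular all (mixed) moments of μ_k converge to the corresponding moments of μ. -/

import Mathlib

open MeasureTheory ProbabilityTheory Filter Topology Pointwise ENNReal

noncomputable section

/-- Euclidean space ℝⁿ. -/
abbrev Euc (n : ℕ) := EuclideanSpace ℝ (Fin n)

/-- A Borel measure is log-concave if `μ(λA + (1-λ)B) ≥ μ(A)^λ μ(B)^(1-λ)` for all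
nonempty compact sets `A, B` and `λ ∈ (0,1)`. -/
def IsLogConcave {α : Type*} [MeasurableSpace α] [TopologicalSpace α]
    [AddCommGroup α] [Module ℝ α] (μ : Measure α) : Prop :=
  ∀ A B : Set α, A.Nonempty → B.Nonempty → IsCompact A → IsCompact B →
    ∀ l : ℝ, 0 < l → l < 1 →
      μ A ^ l * μ B ^ (1 - l) ≤ μ (l • A + (1 - l) • B)

/-- A probability measure on ℝⁿ is isotropic if its mean is `0` and its covariance
matrix is the identity. -/
def IsIsotropic {n : ℕ} (μ : Measure (Euc n)) : Prop :=
  (∫ x, x ∂μ) = 0 ∧ ∀ i j : Fin n, (∫ x, x i * x j ∂μ) = if i = j then 1 else 0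

/-- Total variation distance `2 sup_A |μ(A) - ν(A)|`. -/
def dTV {α : Type*} [MeasurableSpace α] (μ ν : Measure α) : ℝ :=
  2 * ⨆ A : {A : Set α // MeasurableSet A}, |(μ A.1).toReal - (ν A.1).toReal|

/-- Bounded-Lipschitz distance. -/
def dBL {α : Type*} [MeasurableSpace α] [NormedAddCommGroup α] (μ ν : Measure α) : ℝ :=
  ⨆ g : {g : α → ℝ // (∀ x, |g x| ≤ 1) ∧ LipschitzWith 1 g},
    |(∫ x, g.1 x ∂μ) - ∫ x, g.1 x ∂ν|

/-- `L_p` Wasserstein distance. -/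
def Wass {α : Type*} [MeasurableSpace α] [NormedAddCommGroup α]
    (p : ℝ) (μ ν : Measure α) : ℝ :=
  ⨅ π : {π : Measure (α × α) // IsProbabilityMeasure π ∧
      π.map Prod.fst = μ ∧ π.map Prod.snd = ν},
    (∫ q, ‖q.1 - q.2‖ ^ p ∂π.1) ^ (1 / p)

/-- Relative entropy (Kullback–Leibler divergence) `∫ log(dμ/dν) dμ`. -/
def relEnt {α : Type*} [MeasurableSpace α] (μ ν : Measure α) : ℝ :=
  ∫ x, Real.log (μ.rnDeriv ν x).toReal ∂μ

/-- The standard Gaussian measure on ℝⁿ. -/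
def stdGaussian (n : ℕ) : Measure (Euc n) :=
  volume.withDensity fun x =>
    ENNReal.ofReal ((2 * Real.pi) ^ (-(n : ℝ) / 2) * Real.exp (-‖x‖ ^ 2 / 2))

end

noncomputable section

namespace WeakMoments

/-- The dominating tail series term. -/
def tailF (R p : ℝ) (m : ℕ) : ℝ :=
  (1 + (((m:ℝ)+1)*R)^p) * (1/3 : ℝ)^(((m:ℝ)+1)/2)

lemma tailF_nonneg {R p : ℝ} (hR : 0 ≤ R) (m : ℕ) : 0 ≤ tailF R p m := by
  unfold tailF
  have h1 : (0:ℝ) ≤ (((m:ℝ)+1)*R)^p := Real.rpow_nonneg (by positivity) p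
  have h2 : (0:ℝ) ≤ (1/3 : ℝ)^(((m:ℝ)+1)/2) := Real.rpow_nonneg (by norm_num) _
  nlinarith

lemma geom_eq (m : ℕ) : (1/3 : ℝ)^(((m:ℝ)+1)/2) = ((1/3 : ℝ)^((1:ℝ)/2))^(m+1) := by
  rw [← Real.rpow_natCast ((1/3 : ℝ)^((1:ℝ)/2)) (m+1), ← Real.rpow_mul (by norm_num)]
  congr 1
  push_cast
  ring

lemma summable_tailF {R p : ℝ} (hR1 : 1 ≤ R) (hp : 0 ≤ p) : Summable (tailF R p) := by
  set r : ℝ := (1/3 : ℝ)^((1:ℝ)/2) with hrdef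
  have hr0 : 0 < r := Real.rpow_pos_of_pos (by norm_num) _
  have hr1 : r < 1 := Real.rpow_lt_one (by norm_num) (by norm_num) (by norm_num)
  set N : ℕ := ⌈p⌉₊ with hN
  have hsum : Summable (fun m : ℕ => r^m + R^N * ((m:ℝ)^N * r^m)) := by
    apply Summable.add (summable_geometric_of_lt_one hr0.le hr1)
    exact (summable_pow_mul_geometric_of_norm_lt_one (R := ℝ) N
      (by rw [Real.norm_eq_abs, abs_of_pos hr0]; exact hr1)).mul_left _
  have hsum2 : Summable (fun m : ℕ => r^(m+1) + R^N * (((m:ℝ)+1)^N * r^(m+1))) := by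
    have h := (summable_nat_add_iff 1).2 hsum
    apply h.congr
    intro m
    push_cast
    ring
  apply Summable.of_nonneg_of_le (tailF_nonneg (by linarith)) _ hsum2
  intro m
  have hbase : (1:ℝ) ≤ ((m:ℝ)+1)*R := by
    have : (1:ℝ) ≤ (m:ℝ)+1 := by have := Nat.cast_nonneg (α := ℝ) m; linarith
    nlinarith
  have hrp : (((m:ℝ)+1)*R)^p ≤ (((m:ℝ)+1)*R)^(N:ℝ) :=
    Real.rpow_le_rpow_of_exponent_le hbase (Nat.le_ceil p)
  have hrpN : (((m:ℝ)+1)*R)^(N:ℝ) = (((m:ℝ)+1)*R)^N := Real.rpow_natCast _ N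
  have hkey : tailF R p m ≤ (1 + (((m:ℝ)+1)*R)^N) * r^(m+1) := by
    unfold tailF
    rw [geom_eq]
    apply mul_le_mul_of_nonneg_right _ (by positivity)
    rw [← hrpN]; linarith
  calc tailF R p m ≤ (1 + (((m:ℝ)+1)*R)^N) * r^(m+1) := hkey
    _ = r^(m+1) + R^N * (((m:ℝ)+1)^N * r^(m+1)) := by rw [mul_pow]; ring

/-- Borell's lemma: uniform subexponential tail bound for log-concave probability
measures having at least `3/4` of their mass in the ball of radius `R`. -/
lemma borell {n : ℕ} (ν : Measure (Euc n)) [IsProbabilityMeasure ν]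
    (hlc : IsLogConcave ν) {R : ℝ} (hR : 0 < R)
    (h34 : ν {x : Euc n | R < ‖x‖} ≤ ENNReal.ofReal (1/4)) {t : ℝ} (ht : 1 < t) :
    ν {x : Euc n | t * R < ‖x‖} ≤ ENNReal.ofReal ((1/3 : ℝ) ^ ((t+1)/2)) := by
  set A : Set (Euc n) := Metric.closedBall 0 R with hA
  have hAc : Aᶜ = {x : Euc n | R < ‖x‖} := by
    ext x
    simp [hA, Metric.mem_closedBall, dist_zero_right, not_le]
  have hAmeas : MeasurableSet A := measurableSet_closedBall
  have hAcompl : (ν Aᶜ).toReal ≤ 1/4 :=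
    ENNReal.toReal_le_of_le_ofReal (by norm_num) (hAc ▸ h34)
  have hsum : (ν A).toReal + (ν Aᶜ).toReal = 1 := by
    rw [← ENNReal.toReal_add (measure_ne_top _ _) (measure_ne_top _ _),
      measure_add_measure_compl hAmeas, measure_univ, ENNReal.toReal_one]
  have hA34 : (3/4 : ℝ) ≤ (ν A).toReal := by linarith
  have hUopen : IsOpen {x : Euc n | t * R < ‖x‖} :=
    isOpen_lt continuous_const continuous_norm
  have key : ∀ K : Set (Euc n), K ⊆ {x : Euc n | t * R < ‖x‖} → IsCompact K →
      ν K ≤ ENNReal.ofReal ((1/3 : ℝ) ^ ((t+1)/2)) := by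
    intro K hKU hK
    rcases K.eq_empty_or_nonempty with rfl | hKne
    · simp
    set l : ℝ := 2/(t+1) with hl
    have ht0 : (0:ℝ) < t + 1 := by linarith
    have hl0 : 0 < l := by positivity
    have hl1 : l < 1 := by rw [hl, div_lt_one ht0]; linarith
    have hmain := hlc K A hKne ⟨0, by simp [hA, hR.le]⟩ hK (isCompact_closedBall 0 R) l hl0 hl1
    have hsub : l • K + (1 - l) • A ⊆ Aᶜ := by
      rintro w hw
      rcases Set.mem_add.1 hw with ⟨u, hu, v, hv, rfl⟩
      rcases hu with ⟨z, hz, rfl⟩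
      rcases hv with ⟨a, ha, rfl⟩
      have hzn : t * R < ‖z‖ := hKU hz
      have han : ‖a‖ ≤ R := by simpa [hA, dist_zero_right] using ha
      rw [hAc]
      have h1 : ‖l • z‖ - ‖(1-l) • a‖ ≤ ‖l • z + (1-l) • a‖ := by
        have := norm_sub_norm_le (l • z) (-((1-l) • a))
        simpa [sub_neg_eq_add] using this
      have h2 : ‖l • z‖ = l * ‖z‖ := by
        rw [norm_smul, Real.norm_eq_abs, abs_of_pos hl0]
      have h3 : ‖(1-l) • a‖ = (1-l) * ‖a‖ := by
        rw [norm_smul, Real.norm_eq_abs, abs_of_pos (by linarith)]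
      have hlt : l * (t+1) = 2 := by rw [hl, div_mul_cancel₀ _ ht0.ne']
      have : R < l * ‖z‖ - (1-l) * ‖a‖ := by nlinarith
      show R < ‖l • z + (1-l) • a‖
      calc R < l * ‖z‖ - (1-l) * ‖a‖ := this
        _ ≤ ‖l • z + (1-l) • a‖ := by rw [← h2, ← h3]; exact h1
    have hchain : ν K ^ l * ν A ^ (1 - l) ≤ ENNReal.ofReal (1/4) :=
      hmain.trans ((measure_mono hsub).trans (hAc ▸ h34))
    set a : ℝ := (ν K).toReal with hadef
    set b : ℝ := (ν A).toReal with hbdef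
    have ha0 : 0 ≤ a := ENNReal.toReal_nonneg
    have hreal : a ^ l * b ^ (1 - l) ≤ 1/4 := by
      have := ENNReal.toReal_mono (by simp) hchain
      rw [ENNReal.toReal_mul, ← ENNReal.toReal_rpow, ← ENNReal.toReal_rpow,
        ENNReal.toReal_ofReal (by norm_num)] at this
      exact this
    have hb34 : (3/4 : ℝ) ^ (1 - l) ≤ b ^ (1 - l) :=
      Real.rpow_le_rpow (by norm_num) hA34 (by linarith)
    have hb34' : (3/4 : ℝ) ≤ (3/4 : ℝ) ^ (1 - l) := by
      have := Real.rpow_le_rpow_of_exponent_ge (x := 3/4) (by norm_num) (by norm_num)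
        (by linarith : 1 - l ≤ 1)
      simpa using this
    have hal : a ^ l ≤ 1/3 := by
      have h1 : a ^ l * (3/4) ≤ 1/4 := by
        calc a ^ l * (3/4) ≤ a ^ l * b ^ (1-l) := by
              apply mul_le_mul_of_nonneg_left (le_trans hb34' hb34) (Real.rpow_nonneg ha0 l)
          _ ≤ 1/4 := hreal
      linarith
    have hfin : a ≤ (1/3 : ℝ) ^ ((t+1)/2) := by
      have h2 : (a ^ l) ^ (1/l) ≤ (1/3 : ℝ) ^ (1/l) :=
        Real.rpow_le_rpow (Real.rpow_nonneg ha0 l) hal (by positivity)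
      have hll : 1/l = (t+1)/2 := by rw [hl, one_div_div]
      have hrw : (a ^ l) ^ (1/l) = a := by
        rw [← Real.rpow_mul ha0, mul_one_div, div_self (ne_of_gt hl0), Real.rpow_one]
      rwa [hrw, hll] at h2
    have : ν K ≠ ⊤ := measure_ne_top _ _
    rw [← ENNReal.ofReal_toReal this]
    exact ENNReal.ofReal_le_ofReal hfin
  rw [hUopen.measure_eq_iSup_isCompact]
  exact iSup₂_le fun K hKU => iSup_le fun hK => key K hKU hK

lemma borell_nat {n : ℕ} (ν : Measure (Euc n)) [IsProbabilityMeasure ν]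
    (hlc : IsLogConcave ν) {R : ℝ} (hR : 0 < R)
    (h34 : ν {x : Euc n | R < ‖x‖} ≤ ENNReal.ofReal (1/4)) :
    ∀ m : ℕ, 1 ≤ m → ν {x : Euc n | (m:ℝ)*R < ‖x‖}
      ≤ ENNReal.ofReal ((1/3 : ℝ)^(((m:ℝ)+1)/2)) := by
  intro m hm
  rcases eq_or_lt_of_le hm with h1 | h2
  · have hm1 : m = 1 := h1.symm
    subst hm1
    have he : (((1:ℕ):ℝ)+1)/2 = 1 := by norm_num
    rw [he, Real.rpow_one]
    have hs : {x : Euc n | ((1:ℕ):ℝ)*R < ‖x‖} = {x : Euc n | R < ‖x‖} := by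
      norm_num
    rw [hs]
    exact h34.trans (ENNReal.ofReal_le_ofReal (by norm_num))
  · have ht : (1:ℝ) < (m:ℝ) := by exact_mod_cast h2
    exact borell ν hlc hR h34 ht

/-- Chebyshev: an isotropic probability measure puts at most `1/4` of its mass
outside the ball of radius `2√(n+1)`. -/
lemma cheb {n : ℕ} (ν : Measure (Euc n)) [IsProbabilityMeasure ν] (hiso : IsIsotropic ν) :
    ν {x : Euc n | 2 * Real.sqrt (n+1) < ‖x‖} ≤ ENNReal.ofReal (1/4) := by
  have hint : ∀ i : Fin n, Integrable (fun x : Euc n => x i * x i) ν := by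
    intro i
    by_contra h
    have h0 := integral_undef h
    have h1 := hiso.2 i i
    rw [h0, if_pos rfl] at h1
    norm_num at h1
  have hfun : ∀ x : Euc n, ‖x‖^2 = ∑ i, x i * x i := by
    intro x
    rw [EuclideanSpace.norm_eq, Real.sq_sqrt (by positivity)]
    congr 1; ext i; rw [Real.norm_eq_abs, sq_abs, sq]
  have hnint : Integrable (fun x : Euc n => ‖x‖^2) ν := by
    have := integrable_finset_sum (μ := ν) Finset.univ (fun i _ => hint i)
    exact this.congr (Filter.Eventually.of_forall fun x => (hfun x).symm)
  have hval : ∫ x, ‖x‖^2 ∂ν = n := by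
    simp_rw [hfun]
    rw [integral_finset_sum _ (fun i _ => hint i)]
    simp [hiso.2]
  have hmarkov := mul_meas_ge_le_integral_of_nonneg
    (Filter.Eventually.of_forall fun x : Euc n => sq_nonneg ‖x‖) hnint (4*(n+1))
  rw [hval] at hmarkov
  set S := {x : Euc n | 2 * Real.sqrt (n+1) < ‖x‖} with hS
  have hsub : S ⊆ {x : Euc n | 4*(n+1) ≤ ‖x‖^2} := by
    intro x hx
    have h1 : 2 * Real.sqrt (n+1) < ‖x‖ := hx
    have h2 : (0:ℝ) ≤ 2 * Real.sqrt (n+1) := by positivity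
    have h3 : (2 * Real.sqrt (n+1))^2 ≤ ‖x‖^2 := by nlinarith
    have h4 : (2 * Real.sqrt (n+1))^2 = 4*(n+1) := by
      rw [mul_pow, Real.sq_sqrt (by positivity)]; norm_num
    simpa [Set.mem_setOf_eq, ← h4] using h3
  have hmono : (ν S).toReal ≤ (ν {x : Euc n | 4*(n+1) ≤ ‖x‖^2}).toReal :=
    ENNReal.toReal_mono (measure_ne_top _ _) (measure_mono hsub)
  have hpos : (0:ℝ) < 4*(n+1) := by positivity
  have hfinal : (ν S).toReal ≤ 1/4 := by
    have h5 : 4*((n:ℝ)+1) * (ν S).toReal ≤ n := by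
      calc 4*((n:ℝ)+1) * (ν S).toReal
          ≤ 4*((n:ℝ)+1) * (ν {x : Euc n | 4*(n+1) ≤ ‖x‖^2}).toReal :=
            by apply mul_le_mul_of_nonneg_left hmono hpos.le
        _ ≤ n := hmarkov
    have h6 : 0 ≤ (ν S).toReal := ENNReal.toReal_nonneg
    nlinarith
  rw [← ENNReal.ofReal_toReal (measure_ne_top ν S)]
  exact ENNReal.ofReal_le_ofReal hfinal

/-- Uniform tail estimate for the integral of `1 + ‖x‖^p` outside the ball of
radius `jR`, via the shell decomposition and Borell's lemma. -/
lemma tail_lintegral {n : ℕ} (ν : Measure (Euc n)) [IsProbabilityMeasure ν]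
    {R : ℝ} (hR : 0 < R)
    (hb : ∀ m : ℕ, 1 ≤ m → ν {x : Euc n | (m:ℝ)*R < ‖x‖}
      ≤ ENNReal.ofReal ((1/3 : ℝ)^(((m:ℝ)+1)/2)))
    {p : ℝ} (hp : 0 ≤ p) {j : ℕ} (hj : 1 ≤ j) :
    ∫⁻ x in {x : Euc n | (j:ℝ)*R < ‖x‖}, ENNReal.ofReal (1 + ‖x‖^p) ∂ν
      ≤ ∑' i : ℕ, ENNReal.ofReal (tailF R p (i + j)) := by
  set S : ℕ → Set (Euc n) := fun m => {x | (m:ℝ)*R < ‖x‖ ∧ ‖x‖ ≤ ((m:ℝ)+1)*R} with hS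
  have hSmeas : ∀ m, MeasurableSet (S m) := by
    intro m
    exact (measurableSet_lt measurable_const measurable_norm).inter
      (measurableSet_le measurable_norm measurable_const)
  have hcover : {x : Euc n | (j:ℝ)*R < ‖x‖} ⊆ ⋃ i : ℕ, S (i + j) := by
    intro x hx
    have hx' : (j:ℝ)*R < ‖x‖ := hx
    set c : ℝ := ‖x‖/R with hc
    have hjc : (j:ℝ) < c := (lt_div_iff₀ hR).2 (by linarith)
    have hc0 : 0 < c := lt_of_le_of_lt (by positivity : (0:ℝ) ≤ (j:ℝ)) hjc
    have hceil1 : 1 ≤ ⌈c⌉₊ := Nat.one_le_ceil_iff.2 hc0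
    set m : ℕ := max j (⌈c⌉₊ - 1) with hm
    have hmj : j ≤ m := le_max_left _ _
    refine Set.mem_iUnion.2 ⟨m - j, ?_⟩
    have hmeq : (m - j) + j = m := Nat.sub_add_cancel hmj
    rw [hmeq]
    constructor
    · have h1 : ((⌈c⌉₊ - 1 : ℕ):ℝ) < c := by
        rw [Nat.cast_sub hceil1]
        have := Nat.ceil_lt_add_one hc0.le
        push_cast
        linarith
      have h2 : (m:ℝ) < c := by
        rw [hm, Nat.cast_max]
        exact max_lt hjc h1
      rw [hc] at h2
      calc (m:ℝ)*R < (‖x‖/R)*R := by exact mul_lt_mul_of_pos_right h2 hR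
        _ = ‖x‖ := by field_simp
    · have h3 : ⌈c⌉₊ ≤ m + 1 := by omega
      have h4 : c ≤ (m:ℝ) + 1 := by
        calc c ≤ (⌈c⌉₊:ℝ) := Nat.le_ceil c
          _ ≤ (m:ℝ) + 1 := by exact_mod_cast h3
      calc ‖x‖ = (‖x‖/R)*R := by field_simp
        _ ≤ ((m:ℝ)+1)*R := mul_le_mul_of_nonneg_right h4 hR.le
  have hshell : ∀ m : ℕ, 1 ≤ m →
      ∫⁻ x in S m, ENNReal.ofReal (1 + ‖x‖^p) ∂ν ≤ ENNReal.ofReal (tailF R p m) := by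
    intro m hm
    have hbd : ∫⁻ x in S m, ENNReal.ofReal (1 + ‖x‖^p) ∂ν
        ≤ ∫⁻ _ in S m, ENNReal.ofReal (1 + (((m:ℝ)+1)*R)^p) ∂ν := by
      apply setLIntegral_mono' (hSmeas m)
      intro x hxS
      apply ENNReal.ofReal_le_ofReal
      have : ‖x‖^p ≤ (((m:ℝ)+1)*R)^p :=
        Real.rpow_le_rpow (norm_nonneg x) hxS.2 hp
      linarith
    rw [setLIntegral_const] at hbd
    have hmeas : ν (S m) ≤ ENNReal.ofReal ((1/3 : ℝ)^(((m:ℝ)+1)/2)) := by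
      refine le_trans (measure_mono ?_) (hb m hm)
      intro x hxS; exact hxS.1
    calc ∫⁻ x in S m, ENNReal.ofReal (1 + ‖x‖^p) ∂ν
        ≤ ENNReal.ofReal (1 + (((m:ℝ)+1)*R)^p) * ν (S m) := hbd
      _ ≤ ENNReal.ofReal (1 + (((m:ℝ)+1)*R)^p) * ENNReal.ofReal ((1/3 : ℝ)^(((m:ℝ)+1)/2)) :=
          mul_le_mul_right hmeas _
      _ = ENNReal.ofReal (tailF R p m) := by
          rw [← ENNReal.ofReal_mul]
          · rfl
          · have := Real.rpow_nonneg (by positivity : (0:ℝ) ≤ ((m:ℝ)+1)*R) p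
            linarith
  calc ∫⁻ x in {x : Euc n | (j:ℝ)*R < ‖x‖}, ENNReal.ofReal (1 + ‖x‖^p) ∂ν
      ≤ ∫⁻ x in ⋃ i : ℕ, S (i + j), ENNReal.ofReal (1 + ‖x‖^p) ∂ν :=
        lintegral_mono_set hcover
    _ ≤ ∑' i : ℕ, ∫⁻ x in S (i + j), ENNReal.ofReal (1 + ‖x‖^p) ∂ν :=
        lintegral_iUnion_le _ _
    _ ≤ ∑' i : ℕ, ENNReal.ofReal (tailF R p (i + j)) :=
        ENNReal.tsum_le_tsum fun i => hshell (i + j) (le_trans hj (Nat.le_add_left j i))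

end WeakMoments

end

noncomputable section

/-- weak convergence of isotropic log-concave measures implies
convergence of integrals of all continuous functions of polynomial growth; in
particular convergence of all moments. -/
theorem weak_implies_moments {n : ℕ} (μ : Measure (Euc n)) (μs : ℕ → Measure (Euc n))
    (hμp : IsProbabilityMeasure μ) (hμlc : IsLogConcave μ) (hμiso : IsIsotropic μ)
    (hp : ∀ k, IsProbabilityMeasure (μs k)) (hlc : ∀ k, IsLogConcave (μs k))
    (hiso : ∀ k, IsIsotropic (μs k))
    (hweak : ∀ g : Euc n → ℝ, Continuous g → (∃ M : ℝ, ∀ x, |g x| ≤ M) →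
      Tendsto (fun k => ∫ x, g x ∂(μs k)) atTop (𝓝 (∫ x, g x ∂μ))) :
    ∀ p : ℝ, 1 ≤ p → ∀ g : Euc n → ℝ, Continuous g →
      (∃ C : ℝ, ∀ x, |g x| ≤ C * (1 + ‖x‖ ^ p)) →
      Tendsto (fun k => ∫ x, g x ∂(μs k)) atTop (𝓝 (∫ x, g x ∂μ)) := by
  intro p hp1 g hgc hgCex
  obtain ⟨C, hgC⟩ := hgCex
  set R : ℝ := 2 * Real.sqrt (n+1) with hRdef
  have hsqrt1 : (1:ℝ) ≤ Real.sqrt (n+1) := by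
    have h := Real.sqrt_le_sqrt (by linarith [Nat.cast_nonneg (α := ℝ) n] : (1:ℝ) ≤ (n:ℝ)+1)
    rwa [Real.sqrt_one] at h
  have hR0 : (0:ℝ) < R := by rw [hRdef]; linarith
  have hR1 : (1:ℝ) ≤ R := by rw [hRdef]; linarith
  have hp0 : (0:ℝ) ≤ p := by linarith
  have hC0 : (0:ℝ) ≤ C := by
    have h0 := hgC 0
    rw [norm_zero, Real.zero_rpow (by linarith : p ≠ 0)] at h0
    have := abs_nonneg (g 0)
    norm_num at h0
    linarith
  -- Borell-type tail bounds for all the measures involved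
  have hbμ := WeakMoments.borell_nat μ hμlc hR0 (WeakMoments.cheb μ hμiso)
  have hbk : ∀ k, ∀ m : ℕ, 1 ≤ m → μs k {x : Euc n | (m:ℝ)*R < ‖x‖}
      ≤ ENNReal.ofReal ((1/3 : ℝ)^(((m:ℝ)+1)/2)) := by
    intro k
    haveI := hp k
    exact WeakMoments.borell_nat (μs k) (hlc k) hR0 (WeakMoments.cheb (μs k) (hiso k))
  -- integrability of `g` with respect to any such measure
  have hInt : ∀ ν : Measure (Euc n), IsProbabilityMeasure ν →
      (∀ m : ℕ, 1 ≤ m → ν {x : Euc n | (m:ℝ)*R < ‖x‖}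
        ≤ ENNReal.ofReal ((1/3 : ℝ)^(((m:ℝ)+1)/2))) →
      Integrable g ν := by
    intro ν hν hb
    haveI := hν
    refine ⟨hgc.aestronglyMeasurable, ?_⟩
    rw [hasFiniteIntegral_iff_norm]
    have hpt : ∀ x : Euc n, ENNReal.ofReal ‖g x‖
        ≤ ENNReal.ofReal C * ENNReal.ofReal (1 + ‖x‖^p) := by
      intro x
      rw [← ENNReal.ofReal_mul hC0]
      exact ENNReal.ofReal_le_ofReal (by rw [Real.norm_eq_abs]; exact hgC x)
    have hIlt : ∫⁻ x, ENNReal.ofReal (1 + ‖x‖^p) ∂ν < ⊤ := by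
      set s : Set (Euc n) := {x : Euc n | ((1:ℕ):ℝ)*R < ‖x‖} with hs
      have hsmeas : MeasurableSet s := measurableSet_lt measurable_const measurable_norm
      rw [← lintegral_add_compl _ hsmeas]
      have htail : ∫⁻ x in s, ENNReal.ofReal (1 + ‖x‖^p) ∂ν
          ≤ ∑' i : ℕ, ENNReal.ofReal (WeakMoments.tailF R p (i + 1)) :=
        WeakMoments.tail_lintegral ν hR0 hb hp0 le_rfl
      have htsum : (∑' i : ℕ, ENNReal.ofReal (WeakMoments.tailF R p (i + 1)))
          = ENNReal.ofReal (∑' i : ℕ, WeakMoments.tailF R p (i + 1)) :=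
        (ENNReal.ofReal_tsum_of_nonneg (fun i => WeakMoments.tailF_nonneg (by linarith) _)
          ((summable_nat_add_iff 1).2 (WeakMoments.summable_tailF hR1 hp0))).symm
      have hball : ∫⁻ x in sᶜ, ENNReal.ofReal (1 + ‖x‖^p) ∂ν
          ≤ ENNReal.ofReal (1 + R^p) := by
        have hmono : ∫⁻ x in sᶜ, ENNReal.ofReal (1 + ‖x‖^p) ∂ν
            ≤ ∫⁻ _ in sᶜ, ENNReal.ofReal (1 + R^p) ∂ν := by
          apply setLIntegral_mono' hsmeas.compl
          intro x hx
          have hxn : ‖x‖ ≤ R := by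
            have h' : ¬ (((1:ℕ):ℝ)*R < ‖x‖) := hx
            push_neg at h'
            simpa using h'
          refine ENNReal.ofReal_le_ofReal ?_
          have := Real.rpow_le_rpow (norm_nonneg x) hxn hp0
          linarith
        rw [setLIntegral_const] at hmono
        calc ∫⁻ x in sᶜ, ENNReal.ofReal (1 + ‖x‖^p) ∂ν
            ≤ ENNReal.ofReal (1 + R^p) * ν sᶜ := hmono
          _ ≤ ENNReal.ofReal (1 + R^p) * 1 := mul_le_mul_right prob_le_one _
          _ = ENNReal.ofReal (1 + R^p) := mul_one _
      calc ∫⁻ x in s, ENNReal.ofReal (1 + ‖x‖^p) ∂ν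
            + ∫⁻ x in sᶜ, ENNReal.ofReal (1 + ‖x‖^p) ∂ν
          ≤ ENNReal.ofReal (∑' i : ℕ, WeakMoments.tailF R p (i + 1))
            + ENNReal.ofReal (1 + R^p) := add_le_add (htsum ▸ htail) hball
        _ < ⊤ := by
            rw [← ENNReal.ofReal_add]
            · exact ENNReal.ofReal_lt_top
            · exact tsum_nonneg (fun i => WeakMoments.tailF_nonneg (by linarith) _)
            · have := Real.rpow_nonneg hR0.le p; linarith
    calc ∫⁻ x, ENNReal.ofReal ‖g x‖ ∂ν
        ≤ ∫⁻ x, ENNReal.ofReal C * ENNReal.ofReal (1 + ‖x‖^p) ∂ν := lintegral_mono hpt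
      _ = ENNReal.ofReal C * ∫⁻ x, ENNReal.ofReal (1 + ‖x‖^p) ∂ν :=
          lintegral_const_mul' _ _ ENNReal.ofReal_ne_top
      _ < ⊤ := ENNReal.mul_lt_top ENNReal.ofReal_lt_top hIlt
  -- main ε/3 argument
  rw [Metric.tendsto_atTop]
  intro ε hε
  set T : ℕ → ℝ := fun j => ∑' i, WeakMoments.tailF R p (i + j) with hTdef
  have hTtend : Tendsto T atTop (𝓝 0) := tendsto_sum_nat_add _
  have hT0 : ∀ j, 0 ≤ T j :=
    fun j => tsum_nonneg (fun i => WeakMoments.tailF_nonneg (by linarith) _)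
  have hCT : Tendsto (fun j => (C+1) * T j) atTop (𝓝 0) := by
    have := hTtend.const_mul (C+1)
    simpa using this
  have hev : ∀ᶠ j : ℕ in atTop, (C+1) * T j < ε/3 :=
    hCT.eventually_lt_const (by linarith)
  obtain ⟨j, hjε, hj1⟩ := (hev.and (eventually_ge_atTop 1)).exists
  -- the cutoff function
  set χ : Euc n → ℝ := fun x => max 0 (min 1 (((j:ℝ)+1) - ‖x‖/R)) with hχdef
  have hχcont : Continuous χ :=
    continuous_const.max (continuous_const.min
      (continuous_const.sub (continuous_norm.div_const R)))
  have hχ0 : ∀ x, 0 ≤ χ x := fun x => le_max_left _ _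
  have hχle1 : ∀ x, χ x ≤ 1 := fun x => max_le (by norm_num) (min_le_left _ _)
  have hχeq1 : ∀ x : Euc n, ‖x‖ ≤ (j:ℝ)*R → χ x = 1 := by
    intro x hx
    have hdiv : ‖x‖/R ≤ (j:ℝ) := (div_le_iff₀ hR0).2 hx
    have h1 : (1:ℝ) ≤ ((j:ℝ)+1) - ‖x‖/R := by linarith
    show max 0 (min 1 (((j:ℝ)+1) - ‖x‖/R)) = 1
    rw [min_eq_left h1]
    exact max_eq_right (by norm_num)
  have hχeq0 : ∀ x : Euc n, ((j:ℝ)+1)*R ≤ ‖x‖ → χ x = 0 := by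
    intro x hx
    have hdiv : ((j:ℝ)+1) ≤ ‖x‖/R := (le_div_iff₀ hR0).2 hx
    have h1 : ((j:ℝ)+1) - ‖x‖/R ≤ 0 := by linarith
    show max 0 (min 1 (((j:ℝ)+1) - ‖x‖/R)) = 0
    exact max_eq_left (le_trans (min_le_right _ _) h1)
  -- `g·χ` is bounded
  have hgχbdd : ∃ M : ℝ, ∀ x, |g x * χ x| ≤ M := by
    refine ⟨C * (1 + (((j:ℝ)+1)*R)^p), fun x => ?_⟩
    rcases le_or_gt ‖x‖ (((j:ℝ)+1)*R) with hx | hx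
    · have hχabs : |χ x| ≤ 1 := abs_le.2 ⟨by linarith [hχ0 x], hχle1 x⟩
      have h1 : |g x * χ x| ≤ |g x| := by
        rw [abs_mul]
        nlinarith [abs_nonneg (g x)]
      have h2 : ‖x‖^p ≤ (((j:ℝ)+1)*R)^p := Real.rpow_le_rpow (norm_nonneg x) hx hp0
      calc |g x * χ x| ≤ |g x| := h1
        _ ≤ C * (1 + ‖x‖^p) := hgC x
        _ ≤ C * (1 + (((j:ℝ)+1)*R)^p) := by nlinarith
    · rw [hχeq0 x hx.le, mul_zero, abs_zero]
      have := Real.rpow_nonneg (by positivity : (0:ℝ) ≤ ((j:ℝ)+1)*R) p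
      nlinarith
  -- the truncation error is uniformly small
  have herr : ∀ ν : Measure (Euc n), IsProbabilityMeasure ν →
      (∀ m : ℕ, 1 ≤ m → ν {x : Euc n | (m:ℝ)*R < ‖x‖}
        ≤ ENNReal.ofReal ((1/3 : ℝ)^(((m:ℝ)+1)/2))) →
      |(∫ x, g x ∂ν) - ∫ x, g x * χ x ∂ν| ≤ C * T j := by
    intro ν hν hb
    haveI := hν
    have hgint : Integrable g ν := hInt ν hν hb
    have hgχint : Integrable (fun x => g x * χ x) ν := by
      apply hgint.mono ((hgc.mul hχcont).aestronglyMeasurable)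
      apply Filter.Eventually.of_forall
      intro x
      rw [Real.norm_eq_abs, Real.norm_eq_abs, Pi.mul_apply, abs_mul]
      have hχabs : |χ x| ≤ 1 := abs_le.2 ⟨by linarith [hχ0 x], hχle1 x⟩
      nlinarith [abs_nonneg (g x)]
    rw [← integral_sub hgint hgχint]
    have hnorm := norm_integral_le_lintegral_norm (μ := ν)
      (f := fun x => g x - g x * χ x)
    rw [Real.norm_eq_abs] at hnorm
    refine le_trans hnorm ?_
    set s : Set (Euc n) := {x : Euc n | (j:ℝ)*R < ‖x‖} with hs
    have hsmeas : MeasurableSet s := measurableSet_lt measurable_const measurable_norm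
    have hcompl : ∫⁻ x in sᶜ, ENNReal.ofReal ‖g x - g x * χ x‖ ∂ν = 0 := by
      refine le_antisymm ?_ zero_le
      have hz : ∫⁻ x in sᶜ, ENNReal.ofReal ‖g x - g x * χ x‖ ∂ν
          ≤ ∫⁻ _ in sᶜ, 0 ∂ν := by
        apply setLIntegral_mono' hsmeas.compl
        intro x hx
        have hxn : ‖x‖ ≤ (j:ℝ)*R := by
          have h' : ¬ ((j:ℝ)*R < ‖x‖) := hx
          exact not_lt.1 h'
        rw [hχeq1 x hxn, mul_one, sub_self, norm_zero, ENNReal.ofReal_zero]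
      simpa using hz
    have hson : ∫⁻ x in s, ENNReal.ofReal ‖g x - g x * χ x‖ ∂ν
        ≤ ENNReal.ofReal C * ∑' i : ℕ, ENNReal.ofReal (WeakMoments.tailF R p (i + j)) := by
      have hptw : ∀ x : Euc n, ENNReal.ofReal ‖g x - g x * χ x‖
          ≤ ENNReal.ofReal C * ENNReal.ofReal (1 + ‖x‖^p) := by
        intro x
        rw [← ENNReal.ofReal_mul hC0]
        apply ENNReal.ofReal_le_ofReal
        rw [Real.norm_eq_abs]
        have h1 : |g x - g x * χ x| = |g x| * (1 - χ x) := by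
          rw [show g x - g x * χ x = g x * (1 - χ x) by ring, abs_mul,
            abs_of_nonneg (by linarith [hχle1 x] : (0:ℝ) ≤ 1 - χ x)]
        have h2 : |g x| * (1 - χ x) ≤ |g x| := by nlinarith [abs_nonneg (g x), hχ0 x]
        linarith [hgC x]
      calc ∫⁻ x in s, ENNReal.ofReal ‖g x - g x * χ x‖ ∂ν
          ≤ ∫⁻ x in s, ENNReal.ofReal C * ENNReal.ofReal (1 + ‖x‖^p) ∂ν :=
            lintegral_mono hptw
        _ = ENNReal.ofReal C * ∫⁻ x in s, ENNReal.ofReal (1 + ‖x‖^p) ∂ν :=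
            lintegral_const_mul' _ _ ENNReal.ofReal_ne_top
        _ ≤ ENNReal.ofReal C * ∑' i : ℕ, ENNReal.ofReal (WeakMoments.tailF R p (i + j)) :=
            mul_le_mul_right (WeakMoments.tail_lintegral ν hR0 hb hp0 hj1) _
    have htsum : (∑' i : ℕ, ENNReal.ofReal (WeakMoments.tailF R p (i + j)))
        = ENNReal.ofReal (T j) :=
      (ENNReal.ofReal_tsum_of_nonneg (fun i => WeakMoments.tailF_nonneg (by linarith) _)
        ((summable_nat_add_iff j).2 (WeakMoments.summable_tailF hR1 hp0))).symm
    have hfinal : ∫⁻ x, ENNReal.ofReal ‖g x - g x * χ x‖ ∂ν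
        ≤ ENNReal.ofReal (C * T j) := by
      rw [← lintegral_add_compl (μ := ν) (fun x => ENNReal.ofReal ‖g x - g x * χ x‖) hsmeas,
        hcompl, add_zero]
      rw [htsum, ← ENNReal.ofReal_mul hC0] at hson
      exact hson
    calc (∫⁻ x, ENNReal.ofReal ‖g x - g x * χ x‖ ∂ν).toReal
        ≤ (ENNReal.ofReal (C * T j)).toReal :=
          ENNReal.toReal_mono ENNReal.ofReal_ne_top hfinal
      _ = C * T j := ENNReal.toReal_ofReal (by nlinarith [hT0 j])
  -- put everything together
  obtain ⟨N, hN⟩ := Metric.tendsto_atTop.1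
    (hweak (fun x => g x * χ x) (hgc.mul hχcont) hgχbdd) (ε/3) (by linarith)
  refine ⟨N, fun k hk => ?_⟩
  have h1 := herr μ hμp hbμ
  have h2 := by
    haveI := hp k
    exact herr (μs k) (hp k) (hbk k)
  have h3 := hN k hk
  rw [Real.dist_eq] at h3 ⊢
  have hCTj : C * T j < ε/3 := by nlinarith [hT0 j]
  have ht1 : |(∫ x, g x ∂μs k) - ∫ x, g x ∂μ|
      ≤ |(∫ x, g x ∂μs k) - ∫ x, g x * χ x ∂μs k|
        + |(∫ x, g x * χ x ∂μs k) - ∫ x, g x ∂μ| := abs_sub_le _ _ _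
  have ht2 : |(∫ x, g x * χ x ∂μs k) - ∫ x, g x ∂μ|
      ≤ |(∫ x, g x * χ x ∂μs k) - ∫ x, g x * χ x ∂μ|
        + |(∫ x, g x * χ x ∂μ) - ∫ x, g x ∂μ| := abs_sub_le _ _ _
  have h1' : |(∫ x, g x * χ x ∂μ) - ∫ x, g x ∂μ| ≤ C * T j := by
    rw [abs_sub_comm]; exact h1
  linarith

end
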